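/- Let (V, μ₁, μ₂) be a 2-associative algebra over a field K (a vector space with two bilinear associative products μ₁ and μ₂) and let α : V → V be a linear map that is an algebra endomorphism for both products. Then V_α = (V, α∘μ₁, α∘μ₂, α) is a 2-hom-associative algebra, i.e. both (V, α∘μ₁, α) and (V, α∘μ₂, α) are hom-associative algebras. Moreover, if (V', μ₁', μ₂') is another 2-associative algebra with an endomorphism α' of both products, and f : V → V' is linear with f(μᵢ(x,y)) = μᵢ'(f(x), f(y)) for i = 1, 2 and f∘α = α'∘f, then f is a morphism of 2-hom-associative algebras from (V, α∘μ₁, α∘μ₂, α) to (V', α'∘μ₁', α'∘μ₂', α'), i.e. f∘(α∘μᵢ) = (α'∘μᵢ')∘(f⊗f) for i = 1, 2 and f∘α = α'∘f. -/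
import Mathlib


/-- The Yau twist of a 2-associative algebra `(V, μ₁, μ₂)` along an
endomorphism `α` of both products is a 2-hom-associative algebra
`(V, α∘μ₁, α∘μ₂, α)`, and a morphism `f` of 2-associative algebras intertwining the
twisting maps is a morphism of the twisted 2-hom-associative algebras. -/
theorem stmt_2 {K V V' : Type*} [Field K] [AddCommGroup V] [Module K V]
    [AddCommGroup V'] [Module K V']
    (μ₁ μ₂ : V →ₗ[K] V →ₗ[K] V) (μ₁' μ₂' : V' →ₗ[K] V' →ₗ[K] V')
    (α : V →ₗ[K] V) (α' : V' →ₗ[K] V') (f : V →ₗ[K] V')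
    (hassoc₁ : ∀ x y z : V, μ₁ (μ₁ x y) z = μ₁ x (μ₁ y z))
    (hassoc₂ : ∀ x y z : V, μ₂ (μ₂ x y) z = μ₂ x (μ₂ y z))
    (hα₁ : ∀ x y : V, α (μ₁ x y) = μ₁ (α x) (α y))
    (hα₂ : ∀ x y : V, α (μ₂ x y) = μ₂ (α x) (α y))
    (hassoc₁' : ∀ x y z : V', μ₁' (μ₁' x y) z = μ₁' x (μ₁' y z))
    (hassoc₂' : ∀ x y z : V', μ₂' (μ₂' x y) z = μ₂' x (μ₂' y z))
    (hα₁' : ∀ x y : V', α' (μ₁' x y) = μ₁' (α' x) (α' y))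
    (hα₂' : ∀ x y : V', α' (μ₂' x y) = μ₂' (α' x) (α' y))
    (hf₁ : ∀ x y : V, f (μ₁ x y) = μ₁' (f x) (f y))
    (hf₂ : ∀ x y : V, f (μ₂ x y) = μ₂' (f x) (f y))
    (hfα : ∀ x : V, f (α x) = α' (f x)) :
    -- (V, α∘μ₁, α) is a hom-associative algebra
    ((∀ x y : V, α (α (μ₁ x y)) = α (μ₁ (α x) (α y))) ∧
     (∀ x y z : V, α (μ₁ (α x) (α (μ₁ y z))) = α (μ₁ (α (μ₁ x y)) (α z)))) ∧
    -- (V, α∘μ₂, α) is a hom-associative algebra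
    ((∀ x y : V, α (α (μ₂ x y)) = α (μ₂ (α x) (α y))) ∧
     (∀ x y z : V, α (μ₂ (α x) (α (μ₂ y z))) = α (μ₂ (α (μ₂ x y)) (α z)))) ∧
    -- f is a morphism of 2-hom-associative algebras between the twists
    ((∀ x y : V, f (α (μ₁ x y)) = α' (μ₁' (f x) (f y))) ∧
     (∀ x y : V, f (α (μ₂ x y)) = α' (μ₂' (f x) (f y))) ∧
     (∀ x : V, f (α x) = α' (f x))) := by
  refine ⟨⟨fun x y => by rw [hα₁], fun x y z => by rw [← hα₁, ← hα₁, hassoc₁]⟩,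
    ⟨fun x y => by rw [hα₂], fun x y z => by rw [← hα₂, ← hα₂, hassoc₂]⟩,
    fun x y => by rw [hfα, hf₁], fun x y => by rw [hfα, hf₂], hfα⟩
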